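/- Let p ≥ 2 be a real number and M ≥ 1 an integer. There exists a constant c = c(M, p) > 0 such that for all complex numbers z_1, …, z_M one has | |Σ_{j=1}^M z_j|^{p-1}(Σ_{j=1}^M z_j) - Σ_{j=1}^M |z_j|^{p-1} z_j | ≤ c Σ_{j ≠ k} |z_j| |z_k| (|z_j|^{p-2} + |z_k|^{p-2}), where the last sum runs over all ordered pairs (j,k) with 1 ≤ j, k ≤ M and j ≠ k. -/

import Mathlib

/-- `x^s ≤ B^(s-1) * x` for `0 ≤ x ≤ B`, `1 ≤ s`. -/
lemma aux_rpow_le {s x B : ℝ} (hs : 1 ≤ s) (hx : 0 ≤ x) (hxB : x ≤ B) :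
    x ^ s ≤ B ^ (s - 1) * x := by
  rcases eq_or_lt_of_le hx with h | h
  · rw [← h, Real.zero_rpow (by linarith), mul_zero]
  · have h1 : x ^ s = x ^ (s - 1) * x := by
      rw [← Real.rpow_add_one h.ne' (s - 1), sub_add_cancel]
    rw [h1]
    exact mul_le_mul_of_nonneg_right
      (Real.rpow_le_rpow h.le hxB (by linarith)) h.le

/-- one-sided mean value bound via Bernoulli -/
lemma aux_rpow_sub_le {s x y : ℝ} (hs : 1 ≤ s) (hy : 0 ≤ y) (hyx : y ≤ x) :
    x ^ s - y ^ s ≤ s * x ^ (s - 1) * (x - y) := by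
  rcases eq_or_lt_of_le (hy.trans hyx) with h | hx0
  · have hx : x = 0 := h.symm
    have hy0 : y = 0 := le_antisymm (hx ▸ hyx) hy
    simp [hx, hy0, Real.zero_rpow (by linarith : s ≠ 0)]
  · have hb : (-1 : ℝ) ≤ (y - x) / x := by
      rw [le_div_iff₀ hx0]; linarith
    have hber := one_add_mul_self_le_rpow_one_add hb hs
    have he : (1 : ℝ) + (y - x) / x = y / x := by field_simp; ring
    rw [he] at hber
    have hd : (y / x) ^ s = y ^ s / x ^ s := Real.div_rpow hy hx0.le s
    rw [hd] at hber
    have hxs : (0 : ℝ) < x ^ s := Real.rpow_pos_of_pos hx0 s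
    have h1 : x ^ s = x ^ (s - 1) * x := by
      rw [← Real.rpow_add_one hx0.ne' (s - 1), sub_add_cancel]
    have h2 : (1 + s * ((y - x) / x)) * x ^ s ≤ y ^ s := by
      calc (1 + s * ((y - x) / x)) * x ^ s ≤ (y ^ s / x ^ s) * x ^ s :=
            mul_le_mul_of_nonneg_right hber hxs.le
        _ = y ^ s := by field_simp
    have h3 : (1 + s * ((y - x) / x)) * x ^ s
        = x ^ s + s * x ^ (s - 1) * (y - x) := by
      rw [h1]; field_simp
    rw [h3] at h2
    linarith

lemma aux_rpow_lip {s x y B : ℝ} (hs : 1 ≤ s) (hx : 0 ≤ x) (hy : 0 ≤ y)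
    (hxB : x ≤ B) (hyB : y ≤ B) : |x ^ s - y ^ s| ≤ s * B ^ (s - 1) * |x - y| := by
  have hB : 0 ≤ B := hx.trans hxB
  have key : ∀ u v : ℝ, 0 ≤ v → v ≤ u → u ≤ B →
      u ^ s - v ^ s ≤ s * B ^ (s - 1) * (u - v) := by
    intro u v hv hvu huB
    calc u ^ s - v ^ s ≤ s * u ^ (s - 1) * (u - v) := aux_rpow_sub_le hs hv hvu
      _ ≤ s * B ^ (s - 1) * (u - v) := by
          apply mul_le_mul_of_nonneg_right _ (by linarith)
          exact mul_le_mul_of_nonneg_left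
            (Real.rpow_le_rpow (hv.trans hvu) huB (by linarith)) (by linarith)
  rcases le_total y x with h | h
  · rw [abs_of_nonneg (by linarith : (0:ℝ) ≤ x - y),
      abs_of_nonneg (sub_nonneg.2 (Real.rpow_le_rpow hy h (by linarith)))]
    exact key x y hy h hxB
  · rw [abs_of_nonpos (by linarith : x - y ≤ 0),
      abs_of_nonpos (sub_nonpos.2 (Real.rpow_le_rpow hx h (by linarith)))]
    have := key y x hx h hyB
    linarith

/-- two-profile estimate -/
lemma aux_two_term (p : ℝ) (hp : 2 ≤ p) (a b : ℂ) :
    ‖((‖a + b‖ ^ (p - 1) : ℝ) : ℂ) * (a + b) - ((‖a‖ ^ (p - 1) : ℝ) : ℂ) * a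
        - ((‖b‖ ^ (p - 1) : ℝ) : ℂ) * b‖
      ≤ (p + 2) * ((‖a‖ + ‖b‖) ^ (p - 2) * ((‖a‖ + ‖b‖) * ‖b‖)) := by
  set S : ℝ := ‖a‖ + ‖b‖ with hS
  have ha : 0 ≤ ‖a‖ := norm_nonneg a
  have hb : 0 ≤ ‖b‖ := norm_nonneg b
  have hab : ‖a + b‖ ≤ S := norm_add_le a b
  have hX : (0 : ℝ) ≤ S ^ (p - 2) := Real.rpow_nonneg (by linarith) _
  have hid : ((‖a + b‖ ^ (p - 1) : ℝ) : ℂ) * (a + b) - ((‖a‖ ^ (p - 1) : ℝ) : ℂ) * a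
      - ((‖b‖ ^ (p - 1) : ℝ) : ℂ) * b
      = ((‖a + b‖ ^ (p - 1) - ‖a‖ ^ (p - 1) : ℝ) : ℂ) * a
        + ((‖a + b‖ ^ (p - 1) : ℝ) : ℂ) * b
        - ((‖b‖ ^ (p - 1) : ℝ) : ℂ) * b := by
    push_cast; ring
  rw [hid]
  have t0 := norm_sub_le (((‖a + b‖ ^ (p - 1) - ‖a‖ ^ (p - 1) : ℝ) : ℂ) * a
        + ((‖a + b‖ ^ (p - 1) : ℝ) : ℂ) * b) (((‖b‖ ^ (p - 1) : ℝ) : ℂ) * b)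
  have t0' := norm_add_le (((‖a + b‖ ^ (p - 1) - ‖a‖ ^ (p - 1) : ℝ) : ℂ) * a)
        (((‖a + b‖ ^ (p - 1) : ℝ) : ℂ) * b)
  -- Term 1
  have T1 : ‖((‖a + b‖ ^ (p - 1) - ‖a‖ ^ (p - 1) : ℝ) : ℂ) * a‖
      ≤ (p - 1) * S ^ (p - 2) * ‖b‖ * ‖a‖ := by
    rw [norm_mul, Complex.norm_real, Real.norm_eq_abs]
    have hlip : |‖a + b‖ ^ (p - 1) - ‖a‖ ^ (p - 1)|
        ≤ (p - 1) * S ^ (p - 1 - 1) * |‖a + b‖ - ‖a‖| :=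
      aux_rpow_lip (by linarith) (norm_nonneg _) ha hab (by linarith)
    have hdiff : |‖a + b‖ - ‖a‖| ≤ ‖b‖ := by
      have := abs_norm_sub_norm_le (a + b) a
      simpa using this
    have he : p - 1 - 1 = p - 2 := by ring
    rw [he] at hlip
    calc |‖a + b‖ ^ (p - 1) - ‖a‖ ^ (p - 1)| * ‖a‖
        ≤ ((p - 1) * S ^ (p - 2) * ‖b‖) * ‖a‖ := by
          apply mul_le_mul_of_nonneg_right _ ha
          calc |‖a + b‖ ^ (p - 1) - ‖a‖ ^ (p - 1)|
              ≤ (p - 1) * S ^ (p - 2) * |‖a + b‖ - ‖a‖| := hlip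
            _ ≤ (p - 1) * S ^ (p - 2) * ‖b‖ := by
                apply mul_le_mul_of_nonneg_left hdiff
                exact mul_nonneg (by linarith) hX
      _ = (p - 1) * S ^ (p - 2) * ‖b‖ * ‖a‖ := by ring
  -- Term 2
  have T2 : ‖((‖a + b‖ ^ (p - 1) : ℝ) : ℂ) * b‖ ≤ S ^ (p - 2) * S * ‖b‖ := by
    rw [norm_mul, Complex.norm_real, Real.norm_eq_abs,
      abs_of_nonneg (Real.rpow_nonneg (norm_nonneg _) _)]
    have h1 : ‖a + b‖ ^ (p - 1) ≤ S ^ (p - 2) * ‖a + b‖ := by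
      have := aux_rpow_le (s := p - 1) (by linarith) (norm_nonneg (a+b)) hab
      have he : p - 1 - 1 = p - 2 := by ring
      rwa [he] at this
    calc ‖a + b‖ ^ (p - 1) * ‖b‖ ≤ (S ^ (p - 2) * ‖a + b‖) * ‖b‖ :=
          mul_le_mul_of_nonneg_right h1 hb
      _ ≤ (S ^ (p - 2) * S) * ‖b‖ := by
          apply mul_le_mul_of_nonneg_right _ hb
          exact mul_le_mul_of_nonneg_left hab hX
      _ = S ^ (p - 2) * S * ‖b‖ := rfl
  -- Term 3
  have T3 : ‖((‖b‖ ^ (p - 1) : ℝ) : ℂ) * b‖ ≤ S ^ (p - 2) * ‖b‖ * ‖b‖ := by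
    rw [norm_mul, Complex.norm_real, Real.norm_eq_abs,
      abs_of_nonneg (Real.rpow_nonneg hb _)]
    have h1 : ‖b‖ ^ (p - 1) ≤ S ^ (p - 2) * ‖b‖ := by
      have := aux_rpow_le (s := p - 1) (by linarith) hb (by linarith : ‖b‖ ≤ S)
      have he : p - 1 - 1 = p - 2 := by ring
      rwa [he] at this
    exact mul_le_mul_of_nonneg_right h1 hb
  have hSb : ‖b‖ ≤ S := by rw [hS]; linarith
  have hSa : ‖a‖ ≤ S := by rw [hS]; linarith
  have hp1 : (0:ℝ) ≤ p - 1 := by linarith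
  have hXSb : (0:ℝ) ≤ S ^ (p - 2) * S * ‖b‖ :=
    mul_nonneg (mul_nonneg hX (by linarith)) hb
  have e1 : (p - 1) * S ^ (p - 2) * ‖b‖ * ‖a‖ ≤ (p - 1) * (S ^ (p - 2) * S * ‖b‖) := by
    have : (p - 1) * S ^ (p - 2) * ‖b‖ * ‖a‖ ≤ (p - 1) * S ^ (p - 2) * ‖b‖ * S :=
      mul_le_mul_of_nonneg_left hSa (mul_nonneg (mul_nonneg hp1 hX) hb)
    linarith [this, le_of_eq (by ring : (p - 1) * S ^ (p - 2) * ‖b‖ * S = (p - 1) * (S ^ (p - 2) * S * ‖b‖))]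
  have e2 : S ^ (p - 2) * ‖b‖ * ‖b‖ ≤ S ^ (p - 2) * S * ‖b‖ := by
    have : S ^ (p - 2) * ‖b‖ * ‖b‖ ≤ S ^ (p - 2) * ‖b‖ * S :=
      mul_le_mul_of_nonneg_left hSb (mul_nonneg hX hb)
    linarith [this, le_of_eq (by ring : S ^ (p - 2) * ‖b‖ * S = S ^ (p - 2) * S * ‖b‖)]
  have goal2 : (p + 2) * (S ^ (p - 2) * (S * ‖b‖)) = (p + 2) * (S ^ (p - 2) * S * ‖b‖) := by ring
  rw [goal2]
  nlinarith [hXSb]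

theorem nonlinearity_cross_terms_large_p (p : ℝ) (hp : 2 ≤ p) (M : ℕ) (hM : 1 ≤ M) :
    ∃ c : ℝ, 0 < c ∧ ∀ z : Fin M → ℂ,
      ‖((‖∑ j, z j‖ ^ (p - 1) : ℝ) : ℂ) * (∑ j, z j)
          - ∑ j, ((‖z j‖ ^ (p - 1) : ℝ) : ℂ) * z j‖ ≤
        c * ∑ j, ∑ k, if j = k then 0 else
          ‖z j‖ * ‖z k‖ * (‖z j‖ ^ (p - 2) + ‖z k‖ ^ (p - 2)) := by
  have hM0 : (0:ℝ) < (M:ℝ) := by exact_mod_cast hM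
  set c : ℝ := (p + 2) * (1 + M) ^ (p - 1) + (M:ℝ) ^ (p - 1) + 1 with hc
  have hcpos : 0 < c := by
    have h1 : 0 < (p + 2) * ((1:ℝ) + M) ^ (p - 1) :=
      mul_pos (by linarith) (Real.rpow_pos_of_pos (by linarith) _)
    have h2 : (0:ℝ) ≤ (M:ℝ) ^ (p - 1) := Real.rpow_nonneg hM0.le _
    rw [hc]; linarith
  refine ⟨c, hcpos, fun z => ?_⟩
  obtain ⟨m, -, hmax'⟩ := Finset.exists_max_image Finset.univ (fun j => ‖z j‖)
    ⟨⟨0, hM⟩, Finset.mem_univ _⟩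
  have hmax : ∀ j, ‖z j‖ ≤ ‖z m‖ := fun j => hmax' j (Finset.mem_univ j)
  set F : ℂ → ℂ := fun w => ((‖w‖ ^ (p - 1) : ℝ) : ℂ) * w with hF
  set R : ℂ := ∑ j ∈ Finset.univ.erase m, z j with hR
  set B : ℝ := ‖z m‖ with hB
  set A : ℝ := ∑ j ∈ Finset.univ.erase m, ‖z j‖ with hA
  have hBnn : 0 ≤ B := norm_nonneg _
  have hAnn : 0 ≤ A := Finset.sum_nonneg fun j _ => norm_nonneg _
  have hsum : ∑ j, z j = z m + R := (Finset.add_sum_erase _ z (Finset.mem_univ m)).symm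
  have hRA : ‖R‖ ≤ A := norm_sum_le _ _
  have hAMB : A ≤ (M:ℝ) * B := by
    calc A ≤ ∑ _j ∈ Finset.univ.erase m, B :=
          Finset.sum_le_sum fun j _ => hmax j
      _ = ((Finset.univ.erase m).card : ℝ) * B := by
          rw [Finset.sum_const, nsmul_eq_mul]
      _ ≤ (M:ℝ) * B := by
          apply mul_le_mul_of_nonneg_right _ hBnn
          have : (Finset.univ.erase m).card ≤ M := by
            calc (Finset.univ.erase m).card ≤ Finset.univ.card :=
                  Finset.card_erase_le
              _ = M := by simp
          exact_mod_cast this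
  -- the basic quantity
  set W : ℝ := B ^ (p - 2) * B * A with hW
  have hWnn : 0 ≤ W := by
    apply mul_nonneg (mul_nonneg (Real.rpow_nonneg hBnn _) hBnn) hAnn
  -- U : sum of cross terms with first index m
  set U : ℝ := ∑ j ∈ Finset.univ.erase m,
      ‖z m‖ * ‖z j‖ * (‖z m‖ ^ (p - 2) + ‖z j‖ ^ (p - 2)) with hU
  have hWU : W ≤ U := by
    rw [hW, hU, Finset.mul_sum]
    apply Finset.sum_le_sum
    intro j _
    have h1 : (0:ℝ) ≤ ‖z m‖ * ‖z j‖ * ‖z j‖ ^ (p - 2) := by positivity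
    have h2 : B ^ (p - 2) * B * ‖z j‖
        = ‖z m‖ * ‖z j‖ * ‖z m‖ ^ (p - 2) := by rw [hB]; ring
    linarith [le_of_eq h2.symm]
  -- bound on ‖F R‖
  have normF : ∀ w : ℂ, ‖F w‖ = ‖w‖ ^ (p - 1) * ‖w‖ := by
    intro w
    rw [hF]
    rw [norm_mul, Complex.norm_real, Real.norm_eq_abs,
      abs_of_nonneg (Real.rpow_nonneg (norm_nonneg w) _)]
  have hRMB : ‖R‖ ≤ (M:ℝ) * B := hRA.trans hAMB
  have hFR : ‖F R‖ ≤ (M:ℝ) ^ (p - 1) * W := by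
    rw [normF]
    have h1 : ‖R‖ ^ (p - 1) ≤ ((M:ℝ) * B) ^ (p - 1 - 1) * ‖R‖ :=
      aux_rpow_le (by linarith) (norm_nonneg R) hRMB
    have he : p - 1 - 1 = p - 2 := by ring
    rw [he] at h1
    have h2 : ((M:ℝ) * B) ^ (p - 2) = (M:ℝ) ^ (p - 2) * B ^ (p - 2) :=
      Real.mul_rpow hM0.le hBnn
    calc ‖R‖ ^ (p - 1) * ‖R‖ ≤ (((M:ℝ) * B) ^ (p - 2) * ‖R‖) * ‖R‖ :=
          mul_le_mul_of_nonneg_right h1 (norm_nonneg R)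
      _ ≤ (((M:ℝ) * B) ^ (p - 2) * ((M:ℝ) * B)) * A := by
          have hnn : (0:ℝ) ≤ ((M:ℝ) * B) ^ (p - 2) := Real.rpow_nonneg (by positivity) _
          have := mul_le_mul (mul_le_mul_of_nonneg_left hRMB hnn) hRA
            (norm_nonneg R) (by positivity)
          exact this
      _ = (M:ℝ) ^ (p - 1) * W := by
          have hMM : (M:ℝ) ^ (p - 1) = (M:ℝ) ^ (p - 2) * M := by
            rw [show p - 1 = p - 2 + 1 by ring, Real.rpow_add_one hM0.ne']
          rw [h2, hW, hMM]; ring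
  -- bound on sum of ‖F (z j)‖
  have hFsum : ∑ j ∈ Finset.univ.erase m, ‖F (z j)‖ ≤ W := by
    rw [hW, Finset.mul_sum]
    apply Finset.sum_le_sum
    intro j _
    rw [normF]
    have h1 : ‖z j‖ ^ (p - 1) ≤ B ^ (p - 1 - 1) * ‖z j‖ :=
      aux_rpow_le (by linarith) (norm_nonneg _) (hmax j)
    have he : p - 1 - 1 = p - 2 := by ring
    rw [he] at h1
    calc ‖z j‖ ^ (p - 1) * ‖z j‖ ≤ (B ^ (p - 2) * ‖z j‖) * ‖z j‖ :=
          mul_le_mul_of_nonneg_right h1 (norm_nonneg _)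
      _ ≤ (B ^ (p - 2) * ‖z j‖) * B := by
          apply mul_le_mul_of_nonneg_left (hmax j)
          exact mul_nonneg (Real.rpow_nonneg hBnn _) (norm_nonneg _)
      _ = B ^ (p - 2) * B * ‖z j‖ := by ring
  -- bound on the two-term bracket
  have hbr : ‖F (z m + R) - F (z m) - F R‖ ≤ (p + 2) * ((1:ℝ) + M) ^ (p - 1) * W := by
    have h0 := aux_two_term p hp (z m) R
    have hS2 : ‖z m‖ + ‖R‖ ≤ ((1:ℝ) + M) * B := by
      rw [hB] at *
      nlinarith [hRMB]
    have hSnn : (0:ℝ) ≤ ‖z m‖ + ‖R‖ := by positivity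
    have h1 : (‖z m‖ + ‖R‖) ^ (p - 2) ≤ (((1:ℝ) + M) * B) ^ (p - 2) :=
      Real.rpow_le_rpow hSnn hS2 (by linarith)
    have h2 : (((1:ℝ) + M) * B) ^ (p - 2) = ((1:ℝ) + M) ^ (p - 2) * B ^ (p - 2) :=
      Real.mul_rpow (by linarith) hBnn
    have hXnn : (0:ℝ) ≤ (‖z m‖ + ‖R‖) ^ (p - 2) := Real.rpow_nonneg hSnn _
    have h3 : (‖z m‖ + ‖R‖) ^ (p - 2) * ((‖z m‖ + ‖R‖) * ‖R‖)
        ≤ (((1:ℝ) + M) * B) ^ (p - 2) * ((((1:ℝ) + M) * B) * A) := by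
      apply mul_le_mul h1 _ (by positivity) (Real.rpow_nonneg (by positivity) _)
      exact mul_le_mul hS2 hRA (norm_nonneg R) (by positivity)
    have h4 : (((1:ℝ) + M) * B) ^ (p - 2) * ((((1:ℝ) + M) * B) * A)
        = ((1:ℝ) + M) ^ (p - 1) * W := by
      have hMM : ((1:ℝ) + M) ^ (p - 1) = ((1:ℝ) + M) ^ (p - 2) * ((1:ℝ) + M) := by
        rw [show p - 1 = p - 2 + 1 by ring,
          Real.rpow_add_one (by positivity : ((1:ℝ) + M) ≠ 0)]
      rw [h2, hW, hMM]; ring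
    calc ‖F (z m + R) - F (z m) - F R‖
        ≤ (p + 2) * ((‖z m‖ + ‖R‖) ^ (p - 2) * ((‖z m‖ + ‖R‖) * ‖R‖)) := h0
      _ ≤ (p + 2) * (((1:ℝ) + M) ^ (p - 1) * W) := by
          apply mul_le_mul_of_nonneg_left _ (by linarith)
          rw [← h4]; exact h3
      _ = (p + 2) * ((1:ℝ) + M) ^ (p - 1) * W := by ring
  -- U ≤ total double sum T
  set T : ℝ := ∑ j, ∑ k, if j = k then (0:ℝ) else
      ‖z j‖ * ‖z k‖ * (‖z j‖ ^ (p - 2) + ‖z k‖ ^ (p - 2)) with hT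
  have hinnernn : ∀ j : Fin M, (0:ℝ) ≤ ∑ k, if j = k then (0:ℝ) else
      ‖z j‖ * ‖z k‖ * (‖z j‖ ^ (p - 2) + ‖z k‖ ^ (p - 2)) := by
    intro j
    apply Finset.sum_nonneg
    intro k _
    split
    · exact le_rfl
    · positivity
  have hUT : U ≤ T := by
    have hm : U = ∑ k, if m = k then (0:ℝ) else
        ‖z m‖ * ‖z k‖ * (‖z m‖ ^ (p - 2) + ‖z k‖ ^ (p - 2)) := by
      rw [hU, ← Finset.add_sum_erase _ (fun k => if m = k then (0:ℝ) else
        ‖z m‖ * ‖z k‖ * (‖z m‖ ^ (p - 2) + ‖z k‖ ^ (p - 2))) (Finset.mem_univ m)]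
      rw [if_pos rfl, zero_add]
      apply Finset.sum_congr rfl
      intro k hk
      rw [if_neg (Ne.symm (Finset.ne_of_mem_erase hk))]
    rw [hm, hT]
    exact Finset.single_le_sum (fun j _ => hinnernn j) (Finset.mem_univ m)
  -- put everything together
  have hdecomp : F (∑ j, z j) - ∑ j, F (z j)
      = (F (z m + R) - F (z m) - F R) + F R
        + (- ∑ j ∈ Finset.univ.erase m, F (z j)) := by
    rw [hsum, ← Finset.add_sum_erase _ (fun j => F (z j)) (Finset.mem_univ m)]
    ring
  have hmain : ‖F (∑ j, z j) - ∑ j, F (z j)‖ ≤ c * W := by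
    rw [hdecomp]
    calc ‖(F (z m + R) - F (z m) - F R) + F R + (- ∑ j ∈ Finset.univ.erase m, F (z j))‖
        ≤ ‖F (z m + R) - F (z m) - F R‖ + ‖F R‖
          + ‖∑ j ∈ Finset.univ.erase m, F (z j)‖ := by
          refine (norm_add_le _ _).trans ?_
          rw [norm_neg]
          gcongr
          exact norm_add_le _ _
      _ ≤ (p + 2) * ((1:ℝ) + M) ^ (p - 1) * W + (M:ℝ) ^ (p - 1) * W + W := by
          exact add_le_add (add_le_add hbr hFR) ((norm_sum_le _ _).trans hFsum)
      _ = c * W := by rw [hc]; ring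
  have hfin : c * W ≤ c * T := by
    apply mul_le_mul_of_nonneg_left (hWU.trans hUT) hcpos.le
  calc ‖((‖∑ j, z j‖ ^ (p - 1) : ℝ) : ℂ) * (∑ j, z j)
          - ∑ j, ((‖z j‖ ^ (p - 1) : ℝ) : ℂ) * z j‖
      = ‖F (∑ j, z j) - ∑ j, F (z j)‖ := rfl
    _ ≤ c * W := hmain
    _ ≤ c * T := hfin
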